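/- Let L : C → C be a localization functor with adjunction η : Id → L, admitting a right adjoint Γ. Then the essential image of Γ equals the essential image of L. -/
import Mathlib


open CategoryTheory

/-- **Lemma (loc-adjoint, part 2).** If `L : C ⥤ C` is a localization functor
(with adjunction `η : 𝟭 ⟶ L` such that `Lη` is invertible and `Lη = ηL`) admitting a
right adjoint `Γ`, then the essential image of `Γ` equals the essential image of `L`. -/
theorem stmt5 {C : Type*} [Category C] (L Γ : C ⥤ C) (η : 𝟭 C ⟶ L)
    (hloc : ∀ X : C, IsIso (L.map (η.app X)) ∧ L.map (η.app X) = η.app (L.obj X))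
    (adj : L ⊣ Γ) :
    Γ.essImage = L.essImage := by
  -- Step 1 : every `Γ Y` is local, i.e. `η.app (Γ Y)` is an isomorphism.
  have key : ∀ Y : C, IsIso (η.app (Γ.obj Y)) := by
    intro Y
    have hiso := (hloc (Γ.obj Y)).1
    set g : L.obj (Γ.obj Y) ⟶ Γ.obj Y :=
      adj.homEquiv _ _ (inv (L.map (η.app (Γ.obj Y))) ≫ adj.counit.app Y) with hg
    have h1 : η.app (Γ.obj Y) ≫ g = 𝟙 _ := by
      rw [hg, ← Adjunction.homEquiv_naturality_left, IsIso.hom_inv_id_assoc,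
        Adjunction.homEquiv_unit]
      simp only [Functor.id_obj]
      rw [adj.right_triangle_components]
    have h2 : g ≫ η.app (Γ.obj Y) = 𝟙 _ := by
      have hnat := η.naturality g
      simp only [Functor.id_map] at hnat
      rw [hnat, ← (hloc (Γ.obj Y)).2, ← L.map_comp, h1, L.map_id]
      rfl
    exact ⟨g, h1, h2⟩
  -- Step 2 : if `X` is local then the adjunction unit `X ⟶ Γ (L X)` is an isomorphism.
  have key2 : ∀ X : C, IsIso (η.app X) → IsIso (adj.unit.app X) := by
    intro X hX
    have hLiso : IsIso (L.map (η.app X)) := (hloc X).1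
    have hGiso : IsIso (L.map (η.app (Γ.obj (L.obj X)))) := (hloc (Γ.obj (L.obj X))).1
    set r : Γ.obj (L.obj X) ⟶ X :=
      η.app (Γ.obj (L.obj X)) ≫ adj.counit.app (L.obj X) ≫ inv (η.app X) with hr
    have h1 : adj.unit.app X ≫ r = 𝟙 X := by
      have hnat := η.naturality (adj.unit.app X)
      simp only [Functor.id_map, Functor.id_obj, Functor.comp_obj] at hnat
      rw [hr, ← Category.assoc, hnat, Category.assoc,
        adj.left_triangle_components_assoc, IsIso.hom_inv_id]
      rfl
    have h2 : r ≫ adj.unit.app X = 𝟙 _ := by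
      -- it suffices to compare the adjoint transposes
      apply (adj.homEquiv _ _).symm.injective
      have hε : L.map (adj.counit.app (L.obj X))
          = inv (L.map (η.app (Γ.obj (L.obj X)))) ≫ adj.counit.app (L.obj X)
              ≫ L.map (η.app X) := by
        have hnat := η.naturality (adj.counit.app (L.obj X))
        simp only [Functor.id_map, Functor.id_obj, Functor.comp_obj] at hnat
        rw [IsIso.eq_inv_comp, (hloc (Γ.obj (L.obj X))).2, ← hnat, ← (hloc X).2]
      have hLr : L.map r = adj.counit.app (L.obj X) := by
        rw [hr]
        simp only [L.map_comp, hε, Category.assoc]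
        rw [IsIso.hom_inv_id_assoc, ← L.map_comp,
          IsIso.hom_inv_id, L.map_id]
        simp
      rw [Adjunction.homEquiv_counit, Adjunction.homEquiv_counit, L.map_comp,
        Category.assoc, adj.left_triangle_components, Category.comp_id, hLr, L.map_id,
        Category.id_comp]
    exact ⟨r, h1, h2⟩
  -- Conclusion
  ext X
  constructor
  · rintro ⟨Y, ⟨e⟩⟩
    exact ⟨Γ.obj Y, ⟨(asIso (η.app (Γ.obj Y))).symm ≪≫ e⟩⟩
  · rintro ⟨Y, ⟨e⟩⟩
    have hX : IsIso (η.app X) := by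
      have hnat := η.naturality e.hom
      simp only [Functor.id_map] at hnat
      have : η.app X = e.inv ≫ η.app (L.obj Y) ≫ L.map e.hom := by
        rw [← hnat, e.inv_hom_id_assoc]
      rw [this, ← (hloc Y).2]
      have := (hloc Y).1
      infer_instance
    have := key2 X hX
    exact ⟨L.obj X, ⟨(asIso (adj.unit.app X)).symm⟩⟩
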